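/- For any nonnegative integer r, the function l(μ) = e^{-μ} μ^r / ∫_μ^∞ e^{-t} t^r dt is increasing in μ on (0, ∞). -/

import Mathlib

open MeasureTheory Set Real

private lemma base_integrable (r : ℕ) :
    IntegrableOn (fun t : ℝ => Real.exp (-t) * t ^ r) (Set.Ioi 0) := by
  have h : (0:ℝ) < r + 1 := by positivity
  refine (Real.GammaIntegral_convergent h).congr_fun (fun x hx => ?_) measurableSet_Ioi
  rw [show ((r:ℝ) + 1 - 1) = (r:ℝ) by ring]; simp only [Real.rpow_natCast]

private lemma pre_eq (μ : ℝ) : (· + μ : ℝ → ℝ) ⁻¹' (Set.Ioi μ) = Set.Ioi 0 := by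
  ext x; simp

private lemma shift_integrable (r : ℕ) {μ : ℝ} (hμ : 0 < μ) :
    IntegrableOn (fun x : ℝ => Real.exp (-x) * (x + μ) ^ r) (Set.Ioi 0) := by
  have h1 : IntegrableOn ((fun t : ℝ => Real.exp (-t) * t ^ r) ∘ (· + μ)) (Set.Ioi 0) := by
    have hiff := (measurePreserving_add_right volume μ).integrableOn_comp_preimage
      (measurableEmbedding_addRight μ) (f := fun t : ℝ => Real.exp (-t) * t ^ r)
      (s := Set.Ioi μ)
    rw [pre_eq] at hiff
    exact hiff.2 ((base_integrable r).mono_set (Set.Ioi_subset_Ioi hμ.le))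
  have h2 : IntegrableOn (fun x : ℝ =>
      Real.exp μ * ((fun t : ℝ => Real.exp (-t) * t ^ r) ∘ (· + μ)) x) (Set.Ioi 0) :=
    h1.const_mul (Real.exp μ)
  refine h2.congr_fun (fun x hx => ?_) measurableSet_Ioi
  simp only [Function.comp]
  rw [← mul_assoc, ← Real.exp_add]
  ring_nf

private lemma shift_integral (r : ℕ) (μ : ℝ) :
    ∫ t in Set.Ioi μ, Real.exp (-t) * t ^ r
      = Real.exp (-μ) * ∫ x in Set.Ioi 0, Real.exp (-x) * (x + μ) ^ r := by
  rw [← (measurePreserving_add_right volume μ).setIntegral_preimage_emb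
    (measurableEmbedding_addRight μ) (fun t => Real.exp (-t) * t ^ r) (Set.Ioi μ), pre_eq,
    ← integral_const_mul]
  refine setIntegral_congr_fun measurableSet_Ioi (fun x hx => ?_)
  rw [← mul_assoc, ← Real.exp_add]
  ring_nf

private lemma int_pos (r : ℕ) {μ : ℝ} (hμ : 0 < μ) :
    0 < ∫ t in Set.Ioi μ, Real.exp (-t) * t ^ r := by
  have hnn : 0 ≤ᵐ[volume.restrict (Set.Ioi μ)] fun t : ℝ => Real.exp (-t) * t ^ r := by
    refine ae_restrict_of_forall_mem measurableSet_Ioi (fun t ht => ?_)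
    have : (0:ℝ) < t := hμ.trans ht
    positivity
  have hint : IntegrableOn (fun t : ℝ => Real.exp (-t) * t ^ r) (Set.Ioi μ) :=
    (base_integrable r).mono_set (Set.Ioi_subset_Ioi hμ.le)
  rw [setIntegral_pos_iff_support_of_nonneg_ae hnn hint]
  have hsub : Set.Ioi μ ⊆ Function.support (fun t : ℝ => Real.exp (-t) * t ^ r) ∩ Set.Ioi μ := by
    intro t ht
    have htpos : (0:ℝ) < t := hμ.trans ht
    exact ⟨by simp only [Function.mem_support]; positivity, ht⟩
  calc (0:ENNReal) < volume (Set.Ioi μ) := by simp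
    _ ≤ _ := measure_mono hsub

theorem upper_gamma_hazard_increasing (r : ℕ) :
    MonotoneOn
      (fun μ : ℝ => Real.exp (-μ) * μ ^ r / ∫ t in Set.Ioi μ, Real.exp (-t) * t ^ r)
      (Set.Ioi 0) := by
  intro a ha b hb hab
  simp only [Set.mem_Ioi] at ha hb
  rw [div_le_div_iff₀ (int_pos r ha) (int_pos r hb)]
  rw [shift_integral r a, shift_integral r b]
  have key : a ^ r * ∫ x in Set.Ioi 0, Real.exp (-x) * (x + b) ^ r
      ≤ b ^ r * ∫ x in Set.Ioi 0, Real.exp (-x) * (x + a) ^ r := by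
    rw [← integral_const_mul, ← integral_const_mul]
    refine setIntegral_mono_on ((shift_integrable r hb).const_mul _)
      ((shift_integrable r ha).const_mul _) measurableSet_Ioi (fun x hx => ?_)
    have hx0 : (0:ℝ) ≤ x := (Set.mem_Ioi.1 hx).le
    have hmul : a * (x + b) ≤ b * (x + a) := by nlinarith
    have hp : (a * (x + b)) ^ r ≤ (b * (x + a)) ^ r := by
      refine pow_le_pow_left₀ (by positivity) hmul r
    calc a ^ r * (Real.exp (-x) * (x + b) ^ r)
        = Real.exp (-x) * (a * (x + b)) ^ r := by rw [mul_pow]; ring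
      _ ≤ Real.exp (-x) * (b * (x + a)) ^ r :=
          mul_le_mul_of_nonneg_left hp (Real.exp_nonneg _)
      _ = b ^ r * (Real.exp (-x) * (x + a) ^ r) := by rw [mul_pow]; ring
  calc Real.exp (-a) * a ^ r * (Real.exp (-b) * ∫ x in Set.Ioi 0, Real.exp (-x) * (x + b) ^ r)
      = (Real.exp (-a) * Real.exp (-b))
          * (a ^ r * ∫ x in Set.Ioi 0, Real.exp (-x) * (x + b) ^ r) := by ring
    _ ≤ (Real.exp (-a) * Real.exp (-b))
          * (b ^ r * ∫ x in Set.Ioi 0, Real.exp (-x) * (x + a) ^ r) :=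
        mul_le_mul_of_nonneg_left key (by positivity)
    _ = Real.exp (-b) * b ^ r
          * (Real.exp (-a) * ∫ x in Set.Ioi 0, Real.exp (-x) * (x + a) ^ r) := by ring
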